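/- The Polish G-group (H,G) is not nm-stable: for a ∈ H given by a(i,j) = 1 iff j = 0, one has NM(a/∅) = ∞, i.e., NM(a/∅) ≥ α for every ordinal α. -/

import Mathlib

open scoped ENNReal

/-- The weight of a point `(i,j) ∈ ℕ × ℕ`: `2 · 3^{-(i+1)}`. -/
noncomputable def wt (p : ℕ × ℕ) : ℝ≥0∞ := 2 * ((3 : ℝ≥0∞) ^ (p.1 + 1))⁻¹

/-- `‖S‖ = Σ_{(i,j) ∈ S} 2 · 3^{-(i+1)} ∈ [0,∞]` for `S ⊆ ℕ × ℕ`. -/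
noncomputable def nrmS (S : Set (ℕ × ℕ)) : ℝ≥0∞ := ∑' p, S.indicator wt p

lemma nrmS_mono {S T : Set (ℕ × ℕ)} (h : S ⊆ T) : nrmS S ≤ nrmS T :=
  ENNReal.tsum_le_tsum fun p =>
    Set.indicator_le_indicator_of_subset h (fun _ => zero_le ..) p

lemma nrmS_union_le (S T : Set (ℕ × ℕ)) : nrmS (S ∪ T) ≤ nrmS S + nrmS T := by
  rw [nrmS, nrmS, nrmS, ← ENNReal.tsum_add]
  refine ENNReal.tsum_le_tsum fun p => ?_
  by_cases hS : p ∈ S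
  · refine le_trans ?_ (le_add_right le_rfl)
    rw [Set.indicator_of_mem (Set.mem_union_left _ hS), Set.indicator_of_mem hS]
  · by_cases hT : p ∈ T
    · refine le_trans ?_ (le_add_left le_rfl)
      rw [Set.indicator_of_mem (Set.mem_union_right _ hT), Set.indicator_of_mem hT]
    · rw [Set.indicator_of_notMem (fun hc => hc.elim hS hT)]
      exact zero_le ..

lemma nrmS_empty : nrmS ∅ = 0 := by simp [nrmS]

/-- The support of `z : ℕ × ℕ → ZMod 2`. -/
def suppZ (z : ℕ × ℕ → ZMod 2) : Set (ℕ × ℕ) := {p | z p = 1}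

/-- `‖z‖` for `z : ℕ × ℕ → ZMod 2`. -/
noncomputable def nrmZ (z : ℕ × ℕ → ZMod 2) : ℝ≥0∞ := nrmS (suppZ z)

/-- `H = {z : ℕ × ℕ → ZMod 2 | ‖z‖ < ∞}`, as an (additive) subgroup of the product group
`ℕ × ℕ → ZMod 2` with pointwise addition mod 2. -/
noncomputable def Hgrp : AddSubgroup ((ℕ × ℕ) → ZMod 2) where
  carrier := {z | nrmZ z < ⊤}
  zero_mem' := by
    have h : suppZ 0 = ∅ := by ext p; simp [suppZ]
    simp [nrmZ, h, nrmS_empty]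
  add_mem' {z w} hz hw := by
    have hsub : suppZ (z + w) ⊆ suppZ z ∪ suppZ w := by
      intro p hp
      by_contra hc
      simp only [Set.mem_union, suppZ, Set.mem_setOf_eq, not_or] at hc
      have hdi : ∀ x : ZMod 2, x = 0 ∨ x = 1 := by decide
      have hz0 : z p = 0 := (hdi (z p)).resolve_right hc.1
      have hw0 : w p = 0 := (hdi (w p)).resolve_right hc.2
      have hp' : (z + w) p = 1 := hp
      rw [Pi.add_apply, hz0, hw0] at hp'
      exact absurd hp' (by decide)
    calc nrmZ (z + w) ≤ nrmS (suppZ z ∪ suppZ w) := nrmS_mono hsub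
      _ ≤ nrmZ z + nrmZ w := nrmS_union_le _ _
      _ < ⊤ := ENNReal.add_lt_top.2 ⟨hz, hw⟩
  neg_mem' {z} hz := by
    have h : suppZ (-z) = suppZ z := by
      ext p; simp [suppZ, CharTwo.neg_eq]
    simpa [nrmZ, h] using hz
/-- `φ(x) = Σ_i 2 · x i · 3^{-(i+1)}`, the standard map from `2^ℕ` onto the ternary Cantor
set (values of `x` read as `0, 1` in `ℝ`). -/
noncomputable def phiC (x : ℕ → ZMod 2) : ℝ :=
  ∑' i, 2 * ((x i).val : ℝ) * ((3 : ℝ) ^ (i + 1))⁻¹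

/-- The metric on `H`: `d_H(z,w) = Σ_j |φ(z(·,j)) − φ(w(·,j))|`, the `ℓ¹`-distance between
the corresponding points of `C^ℕ ∩ ℓ¹`. -/
noncomputable def dH (z w : ↥Hgrp) : ℝ :=
  ∑' j, |phiC (fun i => (z : (ℕ × ℕ) → ZMod 2) (i, j)) -
          phiC (fun i => (w : (ℕ × ℕ) → ZMod 2) (i, j))|

/-- The support of a permutation `g` of `ℕ × ℕ`. -/
def suppP (g : Equiv.Perm (ℕ × ℕ)) : Set (ℕ × ℕ) := {p | g p ≠ p}

lemma suppP_inv (g : Equiv.Perm (ℕ × ℕ)) : suppP g⁻¹ = suppP g := by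
  ext p
  simp only [suppP, Set.mem_setOf_eq, ne_eq]
  constructor
  · intro h hc
    exact h (by conv_lhs => rw [← hc]; simp)
  · intro h hc
    exact h (by conv_lhs => rw [← hc]; simp)

/-- `G = {g ∈ Sym(ℕ × ℕ) | ‖supp g‖ < ∞}`, as a subgroup of the symmetric group of
`ℕ × ℕ`. -/
noncomputable def Ggrp : Subgroup (Equiv.Perm (ℕ × ℕ)) where
  carrier := {g | nrmS (suppP g) < ⊤}
  one_mem' := by
    have h : suppP 1 = ∅ := by ext p; simp [suppP]
    simp [h, nrmS_empty]
  mul_mem' {f g} hf hg := by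
    have hsub : suppP (f * g) ⊆ suppP f ∪ suppP g := by
      intro p hp
      by_contra hc
      simp only [Set.mem_union, suppP, Set.mem_setOf_eq, ne_eq, not_or, not_not] at hc
      exact hp (by simp only [suppP, Set.mem_setOf_eq, Equiv.Perm.mul_apply, hc.2, hc.1] at *)
    calc nrmS (suppP (f * g)) ≤ nrmS (suppP f ∪ suppP g) := nrmS_mono hsub
      _ ≤ nrmS (suppP f) + nrmS (suppP g) := nrmS_union_le _ _
      _ < ⊤ := ENNReal.add_lt_top.2 ⟨hf, hg⟩
  inv_mem' {g} hg := by simpa [suppP_inv] using hg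

/-- The metric on `G`: `d(f,g) = ‖supp (f⁻¹ ∘ g)‖`. -/
noncomputable def dG (f g : ↥Ggrp) : ℝ :=
  (nrmS (suppP ((f : Equiv.Perm (ℕ × ℕ))⁻¹ * (g : Equiv.Perm (ℕ × ℕ))))).toReal

/-- The action of `G` on `H`: `g • h = h ∘ g⁻¹`. -/
noncomputable def actGH (g : ↥Ggrp) (h : ↥Hgrp) : ↥Hgrp :=
  ⟨fun p => (h : (ℕ × ℕ) → ZMod 2) (((g : Equiv.Perm (ℕ × ℕ)))⁻¹ p), by
    have hsub : suppZ (fun p => (h : (ℕ × ℕ) → ZMod 2) (((g : Equiv.Perm (ℕ × ℕ)))⁻¹ p)) ⊆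
        suppZ (h : (ℕ × ℕ) → ZMod 2) ∪ suppP (g : Equiv.Perm (ℕ × ℕ)) := by
      intro p hp
      by_cases hgp : ((g : Equiv.Perm (ℕ × ℕ)))⁻¹ p = p
      · left
        have : (h : (ℕ × ℕ) → ZMod 2) (((g : Equiv.Perm (ℕ × ℕ)))⁻¹ p) = 1 := hp
        rwa [hgp] at this
      · right
        have : p ∈ suppP ((g : Equiv.Perm (ℕ × ℕ)))⁻¹ := hgp
        rwa [suppP_inv] at this
    show nrmZ _ < ⊤
    calc nrmZ _ ≤ nrmS (suppZ (h : (ℕ × ℕ) → ZMod 2) ∪ suppP (g : Equiv.Perm (ℕ × ℕ))) :=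
          nrmS_mono hsub
      _ ≤ nrmZ (h : (ℕ × ℕ) → ZMod 2) + nrmS (suppP (g : Equiv.Perm (ℕ × ℕ))) :=
          nrmS_union_le _ _
      _ < ⊤ := ENNReal.add_lt_top.2 ⟨h.2, g.2⟩⟩
def colEquiv (c : ℕ) : ℕ ≃ {p : ℕ × ℕ | p.2 = c} where
  toFun := fun i => ⟨(i, c), rfl⟩
  invFun := fun p => p.1.1
  left_inv := fun _ => rfl
  right_inv := fun p => Subtype.ext (Prod.ext rfl p.2.symm)

lemma nrmS_column_lt_top (c : ℕ) : nrmS {p : ℕ × ℕ | p.2 = c} < ⊤ := by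
  set e := colEquiv c with he
  have h0 : nrmS {p : ℕ × ℕ | p.2 = c} = ∑' i : ℕ, wt ((e i : ℕ × ℕ)) := by
    rw [nrmS, ← tsum_subtype]
    exact (Equiv.tsum_eq e fun p => wt (p : ℕ × ℕ)).symm
  have h1 : nrmS {p : ℕ × ℕ | p.2 = c} = ∑' i : ℕ, wt (i, c) := h0
  rw [h1]
  have h2 : ∀ i : ℕ, wt (i, c) = ((3 : ℝ≥0∞)⁻¹) ^ i * (2 * 3⁻¹) := by
    intro i
    rw [wt, pow_succ, ENNReal.mul_inv (Or.inr (by norm_num)) (Or.inr (by norm_num)),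
      ← ENNReal.inv_pow]
    ring
  simp_rw [h2]
  rw [ENNReal.tsum_mul_right, ENNReal.tsum_geometric]
  refine ENNReal.mul_lt_top ?_ ?_
  · rw [lt_top_iff_ne_top]
    refine ENNReal.inv_ne_top.2 ?_
    rw [ne_eq, tsub_eq_zero_iff_le, not_le]
    exact ENNReal.inv_lt_one.2 (by norm_num)
  · exact ENNReal.mul_lt_top (by norm_num) (by simp [ENNReal.inv_lt_top])

/-- The topology on `G` induced by the metric `d`: the topology generated by the open balls
of `d`. -/
noncomputable def tG : TopologicalSpace ↥Ggrp :=
  TopologicalSpace.generateFrom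
    {s | ∃ (f : ↥Ggrp) (ε : ℝ), 0 < ε ∧ s = {g : ↥Ggrp | dG f g < ε}}

/-- The topology on `H` induced by the metric `d_H`: the topology generated by the open
balls of `d_H`. -/
noncomputable def tH : TopologicalSpace ↥Hgrp :=
  TopologicalSpace.generateFrom
    {s | ∃ (z : ↥Hgrp) (ε : ℝ), 0 < ε ∧ s = {w : ↥Hgrp | dH z w < ε}}

/-- The element `a ∈ H` given by `a (i,j) = 1` iff `j = 0`. -/
noncomputable def aElt : ↥Hgrp :=
  ⟨fun p => if p.2 = 0 then 1 else 0, by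
    show nrmZ _ < ⊤
    refine lt_of_le_of_lt (nrmS_mono ?_) (nrmS_column_lt_top 0)
    intro p hp
    by_contra hc
    simp only [suppZ, Set.mem_setOf_eq] at hp
    rw [if_neg (show ¬ p.2 = 0 from hc)] at hp
    exact absurd hp (by decide)⟩

/-- The element `b_n ∈ H` given by `b_n (i,j) = 1` iff `j = n + 1`. -/
noncomputable def bElt (n : ℕ) : ↥Hgrp :=
  ⟨fun p => if p.2 = n + 1 then 1 else 0, by
    show nrmZ _ < ⊤
    refine lt_of_le_of_lt (nrmS_mono ?_) (nrmS_column_lt_top (n + 1))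
    intro p hp
    by_contra hc
    simp only [suppZ, Set.mem_setOf_eq] at hp
    rw [if_neg (show ¬ p.2 = n + 1 from hc)] at hp
    exact absurd hp (by decide)⟩

/-- The set `{b_0, …, b_{n-1}} ⊆ H`. -/
noncomputable def bSet (n : ℕ) : Set ↥Hgrp := {x | ∃ k < n, x = bElt k}

lemma actGH_one (h : ↥Hgrp) : actGH 1 h = h := by
  apply Subtype.ext
  funext p
  show (h : (ℕ × ℕ) → ZMod 2) (((1 : Equiv.Perm (ℕ × ℕ)))⁻¹ p) = _
  simp

lemma actGH_mul (g₁ g₂ : ↥Ggrp) (h : ↥Hgrp) :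
    actGH (g₁ * g₂) h = actGH g₁ (actGH g₂ h) := by
  apply Subtype.ext
  funext p
  show (h : (ℕ × ℕ) → ZMod 2) (((g₁ : Equiv.Perm (ℕ × ℕ)) * (g₂ : Equiv.Perm (ℕ × ℕ)))⁻¹ p)
      = (h : (ℕ × ℕ) → ZMod 2) ((g₂ : Equiv.Perm (ℕ × ℕ))⁻¹ ((g₁ : Equiv.Perm (ℕ × ℕ))⁻¹ p))
  rw [mul_inv_rev, Equiv.Perm.mul_apply]

/-- The pointwise stabilizer `G_C ≤ G` of a set `C ⊆ H`. -/
noncomputable def fixH (C : Set ↥Hgrp) : Subgroup ↥Ggrp where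
  carrier := {g | ∀ c ∈ C, actGH g c = c}
  one_mem' := fun c _ => actGH_one c
  mul_mem' {g₁ g₂} h₁ h₂ := fun c hc => by rw [actGH_mul, h₂ c hc, h₁ c hc]
  inv_mem' {g} hg := fun c hc => by
    conv_lhs => rw [← hg c hc]
    rw [← actGH_mul, inv_mul_cancel, actGH_one]

/-- The orbit `o(a/C)` of `a ∈ H` under the pointwise stabilizer `G_C`. -/
noncomputable def orbitOverH (C : Set ↥Hgrp) (a : ↥Hgrp) : Set ↥Hgrp :=
  {x | ∃ g ∈ fixH C, actGH g a = x}

/-- `a ⫝_A B` in `(H,G)`: the set of those `g ∈ G_A` with `g • a ∈ o(a/A ∪ B)` is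
non-meager in `G_A` (with the subspace topology from the metric topology of `G`). -/
noncomputable def NMIndepH (a : ↥Hgrp) (A B : Set ↥Hgrp) : Prop :=
  ¬ @IsMeagre ↥(fixH A) (@instTopologicalSpaceSubtype ↥Ggrp _ tG)
      {g : ↥(fixH A) | actGH (g : ↥Ggrp) a ∈ orbitOverH (A ∪ B) a}

/-- `NM(a/A) ≥ α` in `(H,G)`, defined by recursion on the ordinal `α`: `NM(a/A) ≥ 0` always
holds, `NM(a/A) ≥ α + 1` iff there is a finite `B` with `A ⊆ B ⊆ H` such that `a` is
nm-dependent on `B` over `A` and `NM(a/B) ≥ α`, and for limit `λ`, `NM(a/A) ≥ λ` iff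
`NM(a/A) ≥ α` for all `α < λ`. -/
noncomputable def NMgeH (a : ↥Hgrp) (α : Ordinal) : Set ↥Hgrp → Prop :=
  Ordinal.limitRecOn α (fun _ => True)
    (fun _ ih A => ∃ B : Set ↥Hgrp, A ⊆ B ∧ B.Finite ∧ ¬ NMIndepH a A B ∧ ih B)
    (fun o _ ih A => ∀ β (hβ : β < o), ih β hβ A)
lemma wt_ne_top (p : ℕ × ℕ) : wt p ≠ ⊤ := by
  rw [wt]
  exact ENNReal.mul_ne_top (by norm_num) (ENNReal.inv_ne_top.2 (by positivity))

lemma wt_ne_zero (p : ℕ × ℕ) : wt p ≠ 0 := by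
  rw [wt]
  refine mul_ne_zero (by norm_num) (ENNReal.inv_ne_zero.2 ?_)
  exact ENNReal.pow_ne_top (by norm_num)

lemma wt_le_nrmS {p : ℕ × ℕ} {S : Set (ℕ × ℕ)} (hp : p ∈ S) : wt p ≤ nrmS S := by
  have := ENNReal.le_tsum (f := S.indicator wt) p
  rwa [Set.indicator_of_mem hp] at this

lemma nrmS_singleton (p : ℕ × ℕ) : nrmS {p} = wt p := by
  rw [nrmS]
  rw [show ({p} : Set (ℕ × ℕ)).indicator wt = fun q => if q = p then wt p else 0 by
    funext q; by_cases h : q = p <;> simp [Set.indicator, h]]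
  exact tsum_eq_single p (fun b hb => if_neg hb) |>.trans (if_pos rfl)

lemma nrmS_pair_le (p q : ℕ × ℕ) : nrmS {p, q} ≤ wt p + wt q := by
  have : ({p, q} : Set (ℕ × ℕ)) = {p} ∪ {q} := rfl
  rw [this]
  refine le_trans (nrmS_union_le _ _) ?_
  rw [nrmS_singleton, nrmS_singleton]
lemma wt_small {ε : ℝ≥0∞} (hε : ε ≠ 0) : ∃ N : ℕ, ∀ i ≥ N, ∀ j, wt (i, j) < ε := by
  obtain ⟨n, hn⟩ := ENNReal.exists_inv_two_pow_lt hε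
  refine ⟨n + 2, fun i hi j => ?_⟩
  have h1 : wt (i, j) ≤ 2 * ((2 : ℝ≥0∞) ^ (i + 1))⁻¹ := by
    rw [wt]
    refine mul_le_mul_right (ENNReal.inv_le_inv.2 (pow_le_pow_left₀ ?_ ?_ _)) _ <;> norm_num
  have h2 : 2 * ((2 : ℝ≥0∞) ^ (i + 1))⁻¹ = (2 : ℝ≥0∞)⁻¹ ^ i := by
    rw [pow_succ, ENNReal.mul_inv (by norm_num) (by norm_num), ← ENNReal.inv_pow,
      mul_comm, mul_assoc, ENNReal.inv_mul_cancel (by norm_num) (by norm_num), mul_one]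
  refine lt_of_le_of_lt (h1.trans h2.le) (lt_of_le_of_lt ?_ hn)
  exact pow_le_pow_of_le_one (by simp) (by simp) (by omega)

lemma finite_heavy {S : Set (ℕ × ℕ)} (hS : nrmS S ≠ ⊤) {δ : ℝ≥0∞} (hδ : δ ≠ 0) :
    {p ∈ S | δ ≤ wt p}.Finite := by
  by_contra hinf
  rw [← Set.not_infinite, not_not] at hinf
  set T := {p ∈ S | δ ≤ wt p}
  have h1 : nrmS T ≤ nrmS S := nrmS_mono (fun p hp => hp.1)
  have h2 : nrmS T = ∑' p : T, wt (p : ℕ × ℕ) := by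
    rw [nrmS, ← tsum_subtype]
  have h3 : (⊤ : ℝ≥0∞) ≤ nrmS T := by
    rw [h2]
    have : Infinite T := hinf.to_subtype
    calc (⊤ : ℝ≥0∞) = ∑' _ : T, δ := (ENNReal.tsum_const_eq_top_of_ne_zero hδ).symm
      _ ≤ ∑' p : T, wt (p : ℕ × ℕ) := ENNReal.tsum_le_tsum fun p => p.2.2
  exact hS (top_le_iff.1 (h3.trans h1))

lemma suppG_ne_top (g : ↥Ggrp) : nrmS (suppP (g : Equiv.Perm (ℕ × ℕ))) ≠ ⊤ :=
  g.2.ne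

lemma dG_self (f : ↥Ggrp) : dG f f = 0 := by
  have h : suppP ((f : Equiv.Perm (ℕ × ℕ))⁻¹ * f) = ∅ := by
    ext p; simp [suppP]
  rw [dG, h, nrmS_empty]
  rfl

lemma coe_inv_mul (f g : ↥Ggrp) :
    ((f⁻¹ * g : ↥Ggrp) : Equiv.Perm (ℕ × ℕ)) = (f : Equiv.Perm (ℕ × ℕ))⁻¹ * g := rfl

lemma dG_lt_iff (f g : ↥Ggrp) {ε : ℝ≥0∞} (hε : ε ≠ ⊤) :
    dG f g < ε.toReal ↔ nrmS (suppP ((f : Equiv.Perm (ℕ × ℕ))⁻¹ * g)) < ε := by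
  rw [dG]
  have h := (f⁻¹ * g : ↥Ggrp).2
  rw [coe_inv_mul] at h
  exact ENNReal.toReal_lt_toReal h.ne hε

lemma suppP_mul_subset (u v : Equiv.Perm (ℕ × ℕ)) : suppP (u * v) ⊆ suppP u ∪ suppP v := by
  intro p hp
  by_contra hc
  simp only [Set.mem_union, suppP, Set.mem_setOf_eq, ne_eq, not_or, not_not] at hc
  exact hp (by simp only [suppP, Set.mem_setOf_eq, Equiv.Perm.mul_apply, hc.2, hc.1] at *)

lemma dG_triangle (c y g : ↥Ggrp) : dG c g ≤ dG c y + dG y g := by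
  rw [dG, dG, dG]
  have h1 := (c⁻¹ * y : ↥Ggrp).2; rw [coe_inv_mul] at h1
  have h2 := (y⁻¹ * g : ↥Ggrp).2; rw [coe_inv_mul] at h2
  rw [← ENNReal.toReal_add h1.ne h2.ne]
  refine ENNReal.toReal_mono (ENNReal.add_lt_top.2 ⟨h1, h2⟩).ne ?_
  have heq : (c : Equiv.Perm (ℕ × ℕ))⁻¹ * g
      = ((c : Equiv.Perm (ℕ × ℕ))⁻¹ * y) * ((y : Equiv.Perm (ℕ × ℕ))⁻¹ * g) := by
    group
  rw [heq]
  exact le_trans (nrmS_mono (suppP_mul_subset _ _)) (nrmS_union_le _ _)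
/-- The generating family of balls for `tG`. -/
noncomputable def ballsG : Set (Set ↥Ggrp) :=
  {s | ∃ (f : ↥Ggrp) (ε : ℝ), 0 < ε ∧ s = {g : ↥Ggrp | dG f g < ε}}

lemma tG_eq : tG = TopologicalSpace.generateFrom ballsG := rfl

lemma ball_basis {V : Set ↥Ggrp} (hV : TopologicalSpace.GenerateOpen ballsG V) :
    ∀ y ∈ V, ∃ ε > 0, ∀ g, dG y g < ε → g ∈ V := by
  induction hV with
  | basic s hs =>
    obtain ⟨c, δ, hδ, rfl⟩ := hs
    intro y hy
    simp only [Set.mem_setOf_eq] at hy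
    refine ⟨δ - dG c y, by linarith, fun g hg => ?_⟩
    simp only [Set.mem_setOf_eq]
    have := dG_triangle c y g
    linarith
  | univ => exact fun y _ => ⟨1, one_pos, fun g _ => trivial⟩
  | inter s t _ _ ihs iht =>
    intro y hy
    obtain ⟨ε₁, hε₁, h₁⟩ := ihs y hy.1
    obtain ⟨ε₂, hε₂, h₂⟩ := iht y hy.2
    exact ⟨min ε₁ ε₂, lt_min hε₁ hε₂, fun g hg =>
      ⟨h₁ g (hg.trans_le (min_le_left _ _)), h₂ g (hg.trans_le (min_le_right _ _))⟩⟩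
  | sUnion S _ ih =>
    intro y hy
    obtain ⟨s, hsS, hys⟩ := hy
    obtain ⟨ε, hε, h⟩ := ih s hsS y hys
    exact ⟨ε, hε, fun g hg => ⟨s, hsS, h g hg⟩⟩

lemma ball_isOpen {c : ↥Ggrp} {ε : ℝ} (hε : 0 < ε) :
    @IsOpen ↥Ggrp tG {g : ↥Ggrp | dG c g < ε} :=
  TopologicalSpace.GenerateOpen.basic _ ⟨c, ε, hε, rfl⟩

/-- The "hitting column n+1" open set. -/
def hitSet (n : ℕ) : Set ↥Ggrp :=
  {g | ∃ p : ℕ × ℕ, p.2 = 0 ∧ (((g : Equiv.Perm (ℕ × ℕ))) p).2 = n + 1}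

lemma hitSet_isOpen (n : ℕ) : @IsOpen ↥Ggrp tG (hitSet n) := by
  have hcov : hitSet n = ⋃ (x : ↥Ggrp) (p : ℕ × ℕ)
      (_ : x ∈ hitSet n ∧ p.2 = 0 ∧ (((x : Equiv.Perm (ℕ × ℕ))) p).2 = n + 1),
      {g : ↥Ggrp | dG x g < (wt p).toReal} := by
    apply Set.Subset.antisymm
    · intro x hx
      obtain ⟨p, hp0, hpn⟩ := hx
      refine Set.mem_iUnion.2 ⟨x, Set.mem_iUnion.2 ⟨p, Set.mem_iUnion.2
        ⟨⟨⟨p, hp0, hpn⟩, hp0, hpn⟩, ?_⟩⟩⟩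
      simp only [Set.mem_setOf_eq, dG_self]
      exact ENNReal.toReal_pos (wt_ne_zero p) (wt_ne_top p)
    · intro g hg
      simp only [Set.mem_iUnion] at hg
      obtain ⟨x, p, ⟨-, hp0, hpn⟩, hball⟩ := hg
      have h1 : nrmS (suppP ((x : Equiv.Perm (ℕ × ℕ))⁻¹ * g)) < wt p :=
        (dG_lt_iff x g (wt_ne_top p)).1 hball
      have h2 : ((x : Equiv.Perm (ℕ × ℕ))⁻¹ * g) p = p := by
        by_contra hc
        exact absurd (lt_of_le_of_lt (wt_le_nrmS hc) h1) (lt_irrefl _)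
      have h3 : (g : Equiv.Perm (ℕ × ℕ)) p = (x : Equiv.Perm (ℕ × ℕ)) p := by
        have := congrArg (x : Equiv.Perm (ℕ × ℕ)) h2
        rwa [Equiv.Perm.mul_apply, Equiv.Perm.inv_def (x : Equiv.Perm (ℕ × ℕ)),
          Equiv.apply_symm_apply] at this
      exact ⟨p, hp0, by rw [h3]; exact hpn⟩
  rw [hcov]
  refine @isOpen_iUnion _ _ tG _ fun x => @isOpen_iUnion _ _ tG _ fun p => @isOpen_iUnion _ _ tG _ fun _ => ?_
  exact ball_isOpen (ENNReal.toReal_pos (wt_ne_zero p) (wt_ne_top p))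
lemma mem_fixH {C : Set ↥Hgrp} {g : ↥Ggrp} : g ∈ fixH C ↔ ∀ c ∈ C, actGH g c = c :=
  Iff.rfl

lemma actGH_apply (g : ↥Ggrp) (h : ↥Hgrp) (p : ℕ × ℕ) :
    (actGH g h : (ℕ × ℕ) → ZMod 2) p
      = (h : (ℕ × ℕ) → ZMod 2) ((g : Equiv.Perm (ℕ × ℕ))⁻¹ p) := rfl

lemma bElt_apply (k : ℕ) (p : ℕ × ℕ) :
    (bElt k : (ℕ × ℕ) → ZMod 2) p = if p.2 = k + 1 then 1 else 0 := rfl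

lemma aElt_apply (p : ℕ × ℕ) :
    (aElt : (ℕ × ℕ) → ZMod 2) p = if p.2 = 0 then 1 else 0 := rfl

lemma perturb (n : ℕ) (f : ↥Ggrp) (hf : f ∈ fixH (bSet n)) {ε : ℝ} (hε : 0 < ε) :
    ∃ g : ↥Ggrp, g ∈ fixH (bSet n) ∧ dG f g < ε ∧ g ∈ hitSet n := by
  classical
  set δ : ℝ≥0∞ := ENNReal.ofReal ε with hδdef
  have hδ0 : δ ≠ 0 := by simp [hδdef, hε]
  have hδtop : δ ≠ ⊤ := ENNReal.ofReal_ne_top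
  set δ2 : ℝ≥0∞ := δ / 2 with hδ2def
  have hδ20 : δ2 ≠ 0 := by
    simp only [hδ2def, ne_eq, ENNReal.div_eq_zero_iff]
    push_neg
    exact ⟨hδ0, by norm_num⟩
  set u : Equiv.Perm (ℕ × ℕ) := (f : Equiv.Perm (ℕ × ℕ))⁻¹ with hudef
  have hufin : nrmS (suppP u) ≠ ⊤ := by
    rw [hudef, suppP_inv]; exact f.2.ne
  have hT : {p ∈ suppP u | δ2 ≤ wt p}.Finite := finite_heavy hufin hδ20
  have hBd : {i : ℕ | u (i, n + 1) ∈ {p ∈ suppP u | δ2 ≤ wt p}}.Finite := by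
    refine Set.Finite.preimage ?_ hT
    intro x _ y _ hxy
    have := u.injective hxy
    exact (Prod.mk.injEq _ _ _ _ ▸ this).1
  obtain ⟨N, hN⟩ := wt_small hδ20
  obtain ⟨M, hM⟩ := hBd.bddAbove
  set i : ℕ := max N (M + 1) with hidef
  have hiN : N ≤ i := le_max_left _ _
  have hinotBd : u (i, n + 1) ∉ {p ∈ suppP u | δ2 ≤ wt p} := by
    intro hc
    have := hM hc
    omega
  set p' : ℕ × ℕ := u (i, n + 1) with hp'def
  have hp'wt : wt p' < δ2 := by
    by_cases hfix : p' = (i, n + 1)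
    · rw [hfix]; exact hN i hiN _
    · have hmem : p' ∈ suppP u := by
        have h1 : u (i, n + 1) ≠ (i, n + 1) := hfix
        show u p' ≠ p'
        intro hc
        exact h1 (u.injective (by rw [hc]))
      by_contra hge
      exact hinotBd ⟨hmem, not_lt.1 hge⟩
  have hp'col : ∀ k, k < n → p'.2 ≠ k + 1 := by
    intro k hk hc
    have hfk := hf (bElt k) ⟨k, hk, rfl⟩
    have := congrFun (congrArg Subtype.val hfk) (i, n + 1)
    rw [actGH_apply, bElt_apply, bElt_apply] at this
    rw [← hudef, ← hp'def, if_pos hc, if_neg (by omega : ¬ (i, n+1).2 = k + 1)] at this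
    exact one_ne_zero this
  set i₀ : ℕ := max N (p'.1 + 1) with hi₀def
  set p₀ : ℕ × ℕ := (i₀, 0) with hp₀def
  have hp₀wt : wt p₀ < δ2 := hN i₀ (le_max_left _ _) _
  have hne : p₀ ≠ p' := by
    intro hc
    have : p₀.1 = p'.1 := by rw [hc]
    simp only [hp₀def, hi₀def] at this
    omega
  set s : Equiv.Perm (ℕ × ℕ) := Equiv.swap p₀ p' with hsdef
  have hsupp : suppP s ⊆ {p₀, p'} := by
    intro q hq
    by_contra hc
    simp only [Set.mem_insert_iff, Set.mem_singleton_iff, not_or] at hc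
    exact hq (Equiv.swap_apply_of_ne_of_ne hc.1 hc.2)
  have hnrm : nrmS (suppP s) < δ := by
    calc nrmS (suppP s) ≤ nrmS {p₀, p'} := nrmS_mono hsupp
      _ ≤ wt p₀ + wt p' := nrmS_pair_le _ _
      _ < δ2 + δ2 := ENNReal.add_lt_add hp₀wt hp'wt
      _ = δ := by rw [hδ2def, ENNReal.add_halves]
  set sG : ↥Ggrp := ⟨s, lt_trans hnrm (lt_top_iff_ne_top.2 hδtop)⟩ with hsGdef
  have hsfix : sG ∈ fixH (bSet n) := by
    intro c hc
    obtain ⟨k, hk, rfl⟩ := hc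
    apply Subtype.ext
    funext q
    rw [actGH_apply, bElt_apply, bElt_apply]
    have hcoe : (sG : Equiv.Perm (ℕ × ℕ))⁻¹ = s := by
      rw [hsGdef]
      exact congrArg _ (Equiv.swap_inv p₀ p') |>.trans rfl
    rw [hcoe]
    by_cases hq₀ : q = p₀
    · subst hq₀
      rw [hsdef, Equiv.swap_apply_left, if_neg (hp'col k hk),
        if_neg (by simp [hp₀def] : ¬ p₀.2 = k + 1)]
    · by_cases hq' : q = p'
      · subst hq'
        rw [hsdef, Equiv.swap_apply_right, if_neg (by simp [hp₀def] : ¬ p₀.2 = k + 1),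
          if_neg (hp'col k hk)]
      · rw [hsdef, Equiv.swap_apply_of_ne_of_ne hq₀ hq']
  refine ⟨f * sG, mul_mem hf hsfix, ?_, ?_⟩
  · have hcoe : ((f * sG : ↥Ggrp) : Equiv.Perm (ℕ × ℕ))
        = (f : Equiv.Perm (ℕ × ℕ)) * s := rfl
    rw [dG, hcoe, inv_mul_cancel_left]
    calc (nrmS (suppP s)).toReal < δ.toReal :=
          (ENNReal.toReal_lt_toReal (lt_trans hnrm (lt_top_iff_ne_top.2 hδtop)).ne hδtop).2 hnrm
      _ = ε := ENNReal.toReal_ofReal hε.le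
  · refine ⟨p₀, rfl, ?_⟩
    have hcoe : ((f * sG : ↥Ggrp) : Equiv.Perm (ℕ × ℕ)) p₀
        = (f : Equiv.Perm (ℕ × ℕ)) (s p₀) := rfl
    rw [hcoe, hsdef, Equiv.swap_apply_left, hp'def, hudef, Equiv.Perm.inv_def (f : Equiv.Perm (ℕ × ℕ)),
      Equiv.apply_symm_apply]
lemma key (n : ℕ) : ¬ NMIndepH aElt (bSet n) (bSet (n + 1)) := by
  rw [NMIndepH, not_not]
  letI : TopologicalSpace ↥Ggrp := tG
  set X := ↥(fixH (bSet n))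
  set M : Set X := {g : X | actGH (g : ↥Ggrp) aElt ∈ orbitOverH (bSet n ∪ bSet (n + 1)) aElt}
    with hMdef
  set Fs : Set X := {g : X | (g : ↥Ggrp) ∉ hitSet n} with hFsdef
  have hMF : M ⊆ Fs := by
    intro g hg hhit
    obtain ⟨h, hh, heq⟩ := hg
    obtain ⟨p, hp0, hpn⟩ := hhit
    set q : ℕ × ℕ := ((g : ↥Ggrp) : Equiv.Perm (ℕ × ℕ)) p with hqdef
    have hbn : bElt n ∈ bSet n ∪ bSet (n + 1) :=
      Or.inr ⟨n, Nat.lt_succ_self n, rfl⟩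
    have hhb := hh (bElt n) hbn
    have h1 := congrFun (congrArg Subtype.val hhb) q
    rw [actGH_apply, bElt_apply, bElt_apply, if_pos hpn] at h1
    have h2 : (((h : Equiv.Perm (ℕ × ℕ)))⁻¹ q).2 = n + 1 := by
      by_contra hc
      rw [if_neg hc] at h1
      exact zero_ne_one h1
    have h3 := congrFun (congrArg Subtype.val heq) q
    rw [actGH_apply, actGH_apply, aElt_apply, aElt_apply] at h3
    rw [hqdef, Equiv.Perm.inv_def ((g : ↥Ggrp) : Equiv.Perm (ℕ × ℕ)),
      Equiv.symm_apply_apply, if_pos hp0, if_neg (by rw [h2]; exact Nat.succ_ne_zero n)] at h3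
    exact zero_ne_one h3
  have hFclosed : IsClosed Fs := by
    rw [hFsdef]
    have : {g : X | (g : ↥Ggrp) ∉ hitSet n} = (Subtype.val ⁻¹' hitSet n)ᶜ := rfl
    rw [this]
    exact (IsOpen.preimage continuous_subtype_val (hitSet_isOpen n)).isClosed_compl
  have hFint : interior Fs = ∅ := by
    rw [Set.eq_empty_iff_forall_notMem]
    intro y hy
    obtain ⟨V, hVopen, hVeq⟩ :=
      (isOpen_induced_iff (f := (Subtype.val : X → ↥Ggrp))).1 (isOpen_interior (s := Fs))
    have hyV : (y : ↥Ggrp) ∈ V := by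
      rw [← Set.mem_preimage, hVeq]; exact hy
    obtain ⟨ε, hε, hball⟩ := ball_basis hVopen (y : ↥Ggrp) hyV
    obtain ⟨g, hgfix, hdist, hghit⟩ := perturb n (y : ↥Ggrp) y.2 hε
    have : (⟨g, hgfix⟩ : X) ∈ interior Fs := by
      rw [← hVeq]
      exact hball g hdist
    exact interior_subset this hghit
  refine isMeagre_iff_countable_union_isNowhereDense.2
    ⟨{Fs}, ?_, Set.countable_singleton _, ?_⟩
  · intro t ht
    rw [Set.mem_singleton_iff] at ht
    subst ht
    rw [IsNowhereDense, hFclosed.closure_eq, hFint]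
  · rw [Set.sUnion_singleton]
    exact hMF

lemma bSet_subset (n : ℕ) : bSet n ⊆ bSet (n + 1) := by
  rintro x ⟨k, hk, rfl⟩
  exact ⟨k, by omega, rfl⟩

lemma bSet_finite (n : ℕ) : (bSet n).Finite := by
  have : bSet n ⊆ (fun k => bElt k) '' (Set.Iio n) := by
    rintro x ⟨k, hk, rfl⟩
    exact ⟨k, hk, rfl⟩
  exact Set.Finite.subset ((Set.finite_Iio n).image _) this

lemma bSet_zero : bSet 0 = ∅ := by
  ext x
  simp only [bSet, Set.mem_setOf_eq, Set.mem_empty_iff_false, iff_false]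
  rintro ⟨k, hk, -⟩
  omega

lemma main_induction : ∀ (α : Ordinal) (n : ℕ), NMgeH aElt α (bSet n) := by
  intro α
  induction α using Ordinal.limitRecOn with
  | zero =>
    intro n
    show Ordinal.limitRecOn 0 _ _ _ (bSet n)
    rw [Ordinal.limitRecOn_zero]
    trivial
  | add_one o ih =>
    intro n
    show Ordinal.limitRecOn (o + 1) _ _ _ (bSet n)
    rw [Ordinal.limitRecOn_add_one]
    exact ⟨bSet (n + 1), bSet_subset n, bSet_finite (n + 1), key n, ih (n + 1)⟩
  | limit o ho ih =>
    intro n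
    show Ordinal.limitRecOn o _ _ _ (bSet n)
    rw [Ordinal.limitRecOn_limit _ _ _ _ ho]
    intro β hβ
    exact ih β hβ n
/-- The Polish `G`-group `(H,G)` is not nm-stable: for `a ∈ H` given by
`a (i,j) = 1` iff `j = 0`, one has `NM(a/∅) = ∞`, i.e. `NM(a/∅) ≥ α` for every ordinal
`α`. -/
theorem statement19 : ∀ α : Ordinal, NMgeH aElt α ∅ := by
  intro α
  rw [← bSet_zero]
  exact main_induction α 0
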